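/- arXiv:2504.20887 — 3 statements merged into one kernel-verified Lean document; each statement's English description precedes it below -/
import Mathlib

section
/- Optimality transfer of return capping (main proposition, abstract form): let (Z_i)_{i ∈ I} be a nonempty family of bounded real random variables (the return distributions of policies), α ∈ (0,1), and suppose i* ∈ I maximizes CVaR_α, i.e. CVaR_α(Z_i) ≤ CVaR_α(Z_{i*}) for all i ∈ I. Set C = VaR_α(Z_{i*}). Then (a) i* also maximizes the capped expectation: E[min(Z_i, C)] ≤ E[min(Z_{i*}, C)] for all i ∈ I; and (b) any j ∈ I maximizing the capped expectation (E[min(Z_i, C)] ≤ E[min(Z_j, C)] for all i) also maximizes CVaR_α: CVaR_α(Z_j) = CVaR_α(Z_{i*}). -/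
open MeasureTheory Set

noncomputable def VaR {Ω : Type*} [MeasurableSpace Ω] (μ : Measure Ω) (Z : Ω → ℝ) (x : ℝ) : ℝ :=
  sInf {z : ℝ | x ≤ (μ {ω | Z ω ≤ z}).toReal}

noncomputable def CVaR {Ω : Type*} [MeasurableSpace Ω] (μ : Measure Ω) (Z : Ω → ℝ) (α : ℝ) : ℝ :=
  (1 / α) * ∫ x in (0:ℝ)..α, VaR μ Z x

section Aux
variable {Ω : Type*} [MeasurableSpace Ω] {μ : Measure Ω} [IsProbabilityMeasure μ]
  {Z : Ω → ℝ} {M : ℝ}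

lemma mem_VaR_set (hbd : ∀ ω, |Z ω| ≤ M) {x : ℝ} (hx : x ≤ 1) :
    M ∈ {z : ℝ | x ≤ (μ {ω | Z ω ≤ z}).toReal} := by
  have h1 : {ω | Z ω ≤ M} = Set.univ :=
    Set.eq_univ_of_forall fun ω => le_trans (le_abs_self _) (hbd ω)
  simp [Set.mem_setOf_eq, h1, hx]

lemma VaR_set_subset (hbd : ∀ ω, |Z ω| ≤ M) {x : ℝ} (hx : 0 < x) :
    {z : ℝ | x ≤ (μ {ω | Z ω ≤ z}).toReal} ⊆ Set.Ici (-M) := by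
  intro z hz
  by_contra h
  rw [Set.mem_Ici] at h
  have h1 : {ω | Z ω ≤ z} = ∅ := by
    ext ω
    simp only [Set.mem_setOf_eq, Set.mem_empty_iff_false, iff_false, not_le]
    calc z < -M := lt_of_not_ge h
    _ ≤ -|Z ω| := by linarith [hbd ω]
    _ ≤ Z ω := neg_abs_le _
  simp only [Set.mem_setOf_eq] at hz
  rw [h1] at hz
  simp at hz
  linarith

lemma VaR_set_nonempty (hbd : ∀ ω, |Z ω| ≤ M) {x : ℝ} (hx : x ≤ 1) :
    {z : ℝ | x ≤ (μ {ω | Z ω ≤ z}).toReal}.Nonempty := ⟨M, mem_VaR_set hbd hx⟩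

lemma VaR_set_bddBelow (hbd : ∀ ω, |Z ω| ≤ M) {x : ℝ} (hx : 0 < x) :
    BddBelow {z : ℝ | x ≤ (μ {ω | Z ω ≤ z}).toReal} :=
  ⟨-M, VaR_set_subset hbd hx⟩

lemma VaR_le (hbd : ∀ ω, |Z ω| ≤ M) {x : ℝ} (hx0 : 0 < x) (hx : x ≤ 1) : VaR μ Z x ≤ M :=
  csInf_le (VaR_set_bddBelow hbd hx0) (mem_VaR_set hbd hx)

lemma le_VaR (hbd : ∀ ω, |Z ω| ≤ M) {x : ℝ} (hx0 : 0 < x) (hx : x ≤ 1) : -M ≤ VaR μ Z x :=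
  le_csInf (VaR_set_nonempty hbd hx) fun z hz => VaR_set_subset hbd hx0 hz

lemma VaR_mono (hbd : ∀ ω, |Z ω| ≤ M) {x y : ℝ} (hx : 0 < x) (hxy : x ≤ y) (hy : y ≤ 1) :
    VaR μ Z x ≤ VaR μ Z y := by
  apply csInf_le_csInf (VaR_set_bddBelow hbd hx) (VaR_set_nonempty hbd hy)
  intro z hz
  exact le_trans hxy hz

end Aux

section Helper

lemma integrableOn_meas_lt {β : Type*} [MeasurableSpace β] (ν : Measure β) [IsFiniteMeasure ν]
    (f : β → ℝ) (K : ℝ) (hK : ∀ᵐ b ∂ν, f b ≤ K) :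
    IntegrableOn (fun t => (ν {b | t < f b}).toReal) (Set.Ioi (0:ℝ)) := by
  have hanti : Antitone (fun t => (ν {b | t < f b}).toReal) := fun s t hst =>
    ENNReal.toReal_mono (measure_ne_top _ _) (measure_mono fun b hb => lt_of_le_of_lt hst hb)
  have hnull : ν {b | K < f b} = 0 := by
    have := hK
    rw [MeasureTheory.ae_iff] at this
    convert this using 2
    ext b
    simp
  refine Integrable.mono'
    (g := Set.indicator (Set.Ioc 0 K) (fun _ => (ν Set.univ).toReal)) ?_
    hanti.measurable.aestronglyMeasurable.restrict ?_
  · rw [integrable_indicator_iff measurableSet_Ioc]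
    refine (integrableOn_const_iff).mpr (Or.inr ?_)
    calc (volume.restrict (Set.Ioi (0:ℝ))) (Set.Ioc 0 K) ≤ volume (Set.Ioc 0 K) :=
          Measure.restrict_le_self _
      _ < ⊤ := measure_Ioc_lt_top
  · refine (ae_restrict_iff' measurableSet_Ioi).mpr (Filter.Eventually.of_forall fun t ht => ?_)
    have hnn : (0:ℝ) ≤ (ν {b | t < f b}).toReal := ENNReal.toReal_nonneg
    rw [Real.norm_eq_abs, abs_of_nonneg hnn]
    by_cases htK : t ≤ K
    · rw [Set.indicator_of_mem (Set.mem_Ioc.mpr ⟨ht, htK⟩)]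
      exact ENNReal.toReal_mono (measure_ne_top _ _) (measure_mono (Set.subset_univ _))
    · push_neg at htK
      rw [Set.indicator_of_notMem (fun h => absurd h.2 (not_le.mpr htK))]
      have : ν {b | t < f b} = 0 :=
        measure_mono_null (fun b hb => lt_trans htK hb) hnull
      simp [this]

end Helper

set_option maxHeartbeats 1000000 in
lemma capped {Ω : Type*} [MeasurableSpace Ω] (μ : Measure Ω) [IsProbabilityMeasure μ]
    (Z : Ω → ℝ) (hZ : Measurable Z) (M : ℝ) (hbd : ∀ ω, |Z ω| ≤ M)
    (α : ℝ) (hα : 0 < α) (hα1 : α < 1) (C : ℝ) :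
    ∫ ω, min (Z ω) C ∂μ ≤ α * CVaR μ Z α + (1 - α) * C ∧
    (C = VaR μ Z α → ∫ ω, min (Z ω) C ∂μ = α * CVaR μ Z α + (1 - α) * C) := by
  have hΩ : Nonempty Ω := by
    by_contra h
    have h2 : (Set.univ : Set Ω) = ∅ := by
      simp [Set.eq_empty_iff_forall_notMem]
      intro ω; exact h ⟨ω⟩
    have := measure_univ (μ := μ)
    rw [h2] at this
    simp at this
  obtain ⟨ω0⟩ := hΩ
  have hM : 0 ≤ M := le_trans (abs_nonneg _) (hbd ω0)
  have hα1' : α ≤ 1 := hα1.le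
  -- monotone extension of VaR
  set W : ℝ → ℝ := fun x => if x ≤ 0 then -M else VaR μ Z (min x α) with hWdef
  have hWmono : Monotone W := by
    intro a b hab
    by_cases ha : a ≤ 0
    · by_cases hb : b ≤ 0
      · simp [hWdef, ha, hb]
      · push_neg at hb
        simp only [hWdef, if_pos ha, if_neg (not_le.mpr hb)]
        exact le_VaR hbd (lt_min hb hα) (min_le_of_right_le hα1')
    · push_neg at ha
      have hb : ¬ b ≤ 0 := not_le.mpr (lt_of_lt_of_le ha hab)
      simp only [hWdef, if_neg (not_le.mpr ha), if_neg hb]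
      exact VaR_mono hbd (lt_min ha hα) (min_le_min hab le_rfl)
        (min_le_of_right_le hα1')
  have hWeq : Set.EqOn W (VaR μ Z) (Set.Ioc 0 α) := by
    intro x hx
    simp only [hWdef, if_neg (not_le.mpr hx.1), min_eq_left hx.2]
  have hWbd : ∀ x, ‖W x‖ ≤ M := by
    intro x
    rw [Real.norm_eq_abs, abs_le]
    by_cases hx : x ≤ 0
    · simp [hWdef, hx]; linarith
    · push_neg at hx
      simp only [hWdef, if_neg (not_le.mpr hx)]
      exact ⟨le_VaR hbd (lt_min hx hα) (min_le_of_right_le hα1'),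
        VaR_le hbd (lt_min hx hα) (min_le_of_right_le hα1')⟩
  have hVint : IntegrableOn (VaR μ Z) (Set.Ioc 0 α) volume := by
    refine (Measure.integrableOn_of_bounded (M := M) measure_Ioc_lt_top.ne
      hWmono.measurable.aestronglyMeasurable (Filter.Eventually.of_forall hWbd)).congr_fun
      hWeq measurableSet_Ioc
  -- CVaR relation
  have hCV : α * CVaR μ Z α = ∫ x in Set.Ioc 0 α, VaR μ Z x := by
    rw [CVaR, intervalIntegral.integral_of_le hα.le]
    field_simp
  -- the positive part function
  have hgint : Integrable (fun ω => max (C - Z ω) 0) μ := by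
    have h1 : IntegrableOn (fun ω => max (C - Z ω) 0) Set.univ μ := by
      refine Measure.integrableOn_of_bounded (M := |C| + M) (measure_ne_top _ _)
        ((measurable_const.sub hZ).max measurable_const).aestronglyMeasurable
        (Filter.Eventually.of_forall fun ω => ?_)
      rw [Real.norm_eq_abs, abs_le]
      constructor
      · have : (0:ℝ) ≤ max (C - Z ω) 0 := le_max_right _ _
        have : (0:ℝ) ≤ |C| + M := by positivity
        linarith [le_max_right (C - Z ω) (0:ℝ)]
      · refine max_le ?_ (by positivity)
        have := hbd ω
        have := abs_le.mp this
        have := neg_abs_le C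
        have := le_abs_self C
        linarith
    rwa [integrableOn_univ] at h1
  have hEmin : ∫ ω, min (Z ω) C ∂μ = C - ∫ ω, max (C - Z ω) 0 ∂μ := by
    have hmin : ∀ ω, min (Z ω) C = C - max (C - Z ω) 0 := by
      intro ω
      rcases le_total (Z ω) C with h | h
      · rw [min_eq_left h, max_eq_left (by linarith)]; ring
      · rw [min_eq_right h, max_eq_right (by linarith)]; ring
    simp_rw [hmin]
    rw [integral_sub (integrable_const C) hgint, integral_const]
    simp
  -- layer cake on the Ω side
  have hLCg : ∫ ω, max (C - Z ω) 0 ∂μ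
      = ∫ t in Set.Ioi 0, (μ {ω | t < max (C - Z ω) 0}).toReal :=
    hgint.integral_eq_integral_meas_lt (Filter.Eventually.of_forall fun ω => le_max_right _ _)
  -- integrability of VaR positive part
  haveI hfinres : IsFiniteMeasure (volume.restrict (Set.Ioc (0:ℝ) α)) := by
    constructor
    rw [Measure.restrict_apply_univ]
    exact measure_Ioc_lt_top
  have hvint : IntegrableOn (fun x => max (C - VaR μ Z x) 0) (Set.Ioc 0 α) volume :=
    (((integrableOn_const_iff (C := C)).mpr (Or.inr measure_Ioc_lt_top)).sub hVint).pos_part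
  have hLCv : ∫ x in Set.Ioc 0 α, max (C - VaR μ Z x) 0
      = ∫ t in Set.Ioi 0, ((volume.restrict (Set.Ioc 0 α)) {x | t < max (C - VaR μ Z x) 0}).toReal :=
    hvint.integral_eq_integral_meas_lt (Filter.Eventually.of_forall fun x => le_max_right _ _)
  -- set identification on the Ω side
  have hsetZ : ∀ t : ℝ, 0 < t → {ω | t < max (C - Z ω) 0} = {ω | Z ω < C - t} := by
    intro t ht
    ext ω
    simp only [Set.mem_setOf_eq, lt_max_iff]
    constructor
    · rintro (h | h)
      · linarith
      · linarith
    · intro h; left; linarith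
  -- the subset bound on the quantile side
  have hsub : ∀ t : ℝ, 0 < t →
      {x | t < max (C - VaR μ Z x) 0} ∩ Set.Ioc 0 α ⊆ Set.Ioc 0 ((μ {ω | Z ω < C - t}).toReal) := by
    rintro t ht x ⟨hx1, hx2⟩
    simp only [Set.mem_setOf_eq, lt_max_iff] at hx1
    have hVx : VaR μ Z x < C - t := by
      rcases hx1 with h | h
      · linarith
      · linarith
    obtain ⟨z, hzmem, hzlt⟩ :=
      exists_lt_of_csInf_lt (VaR_set_nonempty hbd (le_trans hx2.2 hα1')) hVx
    refine ⟨hx2.1, le_trans hzmem ?_⟩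
    exact ENNReal.toReal_mono (measure_ne_top _ _)
      (measure_mono fun ω hω => lt_of_le_of_lt hω hzlt)
  -- pointwise comparison of measures
  have hptle : ∀ t ∈ Set.Ioi (0:ℝ),
      ((volume.restrict (Set.Ioc 0 α)) {x | t < max (C - VaR μ Z x) 0}).toReal
        ≤ (μ {ω | t < max (C - Z ω) 0}).toReal := by
    intro t ht
    rw [Measure.restrict_apply' measurableSet_Ioc, hsetZ t ht]
    set A : ℝ := (μ {ω | Z ω < C - t}).toReal with hA
    calc (volume ({x | t < max (C - VaR μ Z x) 0} ∩ Set.Ioc 0 α)).toReal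
        ≤ (volume (Set.Ioc 0 A)).toReal := by
          refine ENNReal.toReal_mono measure_Ioc_lt_top.ne (measure_mono (hsub t ht))
      _ = A := by rw [Real.volume_Ioc, sub_zero, ENNReal.toReal_ofReal ENNReal.toReal_nonneg]
  -- integrability of both tail functions
  have hint_v : IntegrableOn
      (fun t => ((volume.restrict (Set.Ioc 0 α)) {x | t < max (C - VaR μ Z x) 0}).toReal)
      (Set.Ioi (0:ℝ)) volume := by
    refine integrableOn_meas_lt _ _ (|C| + M) ?_
    refine (ae_restrict_iff' measurableSet_Ioc).mpr (Filter.Eventually.of_forall fun x hx => ?_)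
    refine max_le ?_ (by positivity)
    have h1 := le_VaR (μ := μ) hbd hx.1 (le_trans hx.2 hα1')
    have h2 := le_abs_self C
    linarith
  have hint_mu : IntegrableOn (fun t => (μ {ω | t < max (C - Z ω) 0}).toReal)
      (Set.Ioi (0:ℝ)) volume := by
    refine integrableOn_meas_lt _ _ (|C| + M) (Filter.Eventually.of_forall fun ω => ?_)
    refine max_le ?_ (by positivity)
    have := abs_le.mp (hbd ω)
    have := le_abs_self C
    linarith
  -- constant integral
  have hconst : ∫ _x in Set.Ioc (0:ℝ) α, C ∂volume = α * C := by
    rw [setIntegral_const, Real.volume_real_Ioc_of_le hα.le, sub_zero, smul_eq_mul]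
  have hsubint : ∫ x in Set.Ioc 0 α, (C - VaR μ Z x) ∂volume = α * C - ∫ x in Set.Ioc 0 α, VaR μ Z x := by
    rw [integral_sub ((integrableOn_const_iff (C := C)).mpr (Or.inr measure_Ioc_lt_top)) hVint, hconst]
  -- main inequality between the two tail integrals
  have hmainle : ∫ x in Set.Ioc 0 α, max (C - VaR μ Z x) 0
      ≤ ∫ ω, max (C - Z ω) 0 ∂μ := by
    rw [hLCg, hLCv]
    exact setIntegral_mono_on hint_v hint_mu measurableSet_Ioi hptle
  have hposle : ∫ x in Set.Ioc 0 α, (C - VaR μ Z x) ∂volume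
      ≤ ∫ x in Set.Ioc 0 α, max (C - VaR μ Z x) 0 := by
    refine setIntegral_mono_on
      (((integrableOn_const_iff (C := C)).mpr (Or.inr measure_Ioc_lt_top)).sub hVint) hvint
      measurableSet_Ioc fun x _ => le_max_left _ _
  constructor
  · -- inequality
    rw [hEmin]
    have : α * C - α * CVaR μ Z α ≤ ∫ ω, max (C - Z ω) 0 ∂μ := by
      rw [hCV, ← hsubint]
      exact le_trans hposle hmainle
    linarith
  · -- equality case
    intro hC
    have hposeq : ∫ x in Set.Ioc 0 α, max (C - VaR μ Z x) 0
        = ∫ x in Set.Ioc 0 α, (C - VaR μ Z x) ∂volume := by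
      refine setIntegral_congr_fun measurableSet_Ioc fun x hx => ?_
      have : VaR μ Z x ≤ C := hC ▸ VaR_mono hbd hx.1 hx.2 hα1'
      exact max_eq_left (by linarith)
    have hpteq : ∀ t ∈ Set.Ioi (0:ℝ),
        ((volume.restrict (Set.Ioc 0 α)) {x | t < max (C - VaR μ Z x) 0}).toReal
          = (μ {ω | t < max (C - Z ω) 0}).toReal := by
      intro t ht
      have ht' : (0:ℝ) < t := ht
      rw [Measure.restrict_apply' measurableSet_Ioc, hsetZ t ht']
      set A : ℝ := (μ {ω | Z ω < C - t}).toReal with hA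
      have hAnn : 0 ≤ A := ENNReal.toReal_nonneg
      have hAofReal : μ {ω | Z ω < C - t} = ENNReal.ofReal A :=
        (ENNReal.ofReal_toReal (measure_ne_top _ _)).symm
      have hU : {ω | Z ω < C - t} = ⋃ n : ℕ, {ω | Z ω ≤ C - t - 1/(n+1)} := by
        ext ω
        simp only [Set.mem_setOf_eq, Set.mem_iUnion]
        constructor
        · intro h
          obtain ⟨n, hn⟩ := exists_nat_one_div_lt (show (0:ℝ) < C - t - Z ω by linarith)
          exact ⟨n, by push_cast at hn ⊢; linarith⟩
        · rintro ⟨n, hn⟩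
          have h1 : (0:ℝ) < 1/((n:ℝ)+1) := by positivity
          linarith
      have hmono2 : Monotone (fun n : ℕ => {ω | Z ω ≤ C - t - 1/((n:ℝ)+1)}) := by
        intro n m hnm ω hω
        simp only [Set.mem_setOf_eq] at hω ⊢
        have h1 : 1/((m:ℝ)+1) ≤ 1/((n:ℝ)+1) := by
          apply one_div_le_one_div_of_le (by positivity)
          exact_mod_cast by omega
        linarith
      have hsup : μ {ω | Z ω < C - t} = ⨆ n : ℕ, μ {ω | Z ω ≤ C - t - 1/((n:ℝ)+1)} := by
        rw [hU]
        exact Directed.measure_iUnion hmono2.directed_le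
      -- key: from x < A, find a quantile witness
      have hwit : ∀ x : ℝ, 0 ≤ x → x < A → ∃ n : ℕ,
          x ≤ (μ {ω | Z ω ≤ C - t - 1/((n:ℝ)+1)}).toReal := by
        intro x hx0 hxA
        have h1 : ENNReal.ofReal x < μ {ω | Z ω < C - t} := by
          rw [hAofReal]
          exact (ENNReal.ofReal_lt_ofReal_iff (lt_of_le_of_lt hx0 hxA)).mpr hxA
        rw [hsup] at h1
        obtain ⟨n, hn⟩ := lt_iSup_iff.mp h1
        refine ⟨n, ?_⟩
        have := ENNReal.toReal_mono (measure_ne_top _ _) hn.le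
        rwa [ENNReal.toReal_ofReal hx0] at this
      have hAα : A ≤ α := by
        by_contra hcon
        push_neg at hcon
        obtain ⟨n, hn⟩ := hwit α hα.le hcon
        have hmem : (C - t - 1/((n:ℝ)+1)) ∈ {z : ℝ | α ≤ (μ {ω | Z ω ≤ z}).toReal} := hn
        have h2 : VaR μ Z α ≤ C - t - 1/((n:ℝ)+1) :=
          csInf_le (VaR_set_bddBelow hbd hα) hmem
        have h3 : (0:ℝ) < 1/((n:ℝ)+1) := by positivity
        rw [← hC] at h2
        linarith
      have hlow : Set.Ioo 0 A ⊆ {x | t < max (C - VaR μ Z x) 0} ∩ Set.Ioc 0 α := by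
        rintro x ⟨hx0, hxA⟩
        obtain ⟨n, hn⟩ := hwit x hx0.le hxA
        have hmem : (C - t - 1/((n:ℝ)+1)) ∈ {z : ℝ | x ≤ (μ {ω | Z ω ≤ z}).toReal} := hn
        have h2 : VaR μ Z x ≤ C - t - 1/((n:ℝ)+1) :=
          csInf_le (VaR_set_bddBelow hbd hx0) hmem
        have h3 : (0:ℝ) < 1/((n:ℝ)+1) := by positivity
        constructor
        · simp only [Set.mem_setOf_eq, lt_max_iff]
          left; linarith
        · exact ⟨hx0, le_trans hxA.le hAα⟩
      have hgevol : ENNReal.ofReal A ≤ volume ({x | t < max (C - VaR μ Z x) 0} ∩ Set.Ioc 0 α) := by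
        calc ENNReal.ofReal A = volume (Set.Ioo 0 A) := by rw [Real.volume_Ioo, sub_zero]
          _ ≤ _ := measure_mono hlow
      have hlevol : volume ({x | t < max (C - VaR μ Z x) 0} ∩ Set.Ioc 0 α) ≤ ENNReal.ofReal A := by
        refine le_trans (measure_mono (hsub t ht')) ?_
        rw [Real.volume_Ioc, sub_zero]
      rw [le_antisymm hlevol hgevol, ENNReal.toReal_ofReal hAnn]
    have hmaineq : ∫ x in Set.Ioc 0 α, max (C - VaR μ Z x) 0
        = ∫ ω, max (C - Z ω) 0 ∂μ := by
      rw [hLCg, hLCv]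
      exact setIntegral_congr_fun measurableSet_Ioi hpteq
    rw [hEmin, ← hmaineq, hposeq, hsubint, hCV]
    ring

theorem return_capping_optimality {Ω : Type*} [MeasurableSpace Ω] (μ : Measure Ω)
    [IsProbabilityMeasure μ] {I : Type*} [Nonempty I] (Z : I → Ω → ℝ)
    (hZ : ∀ i, Measurable (Z i)) (M : ℝ) (hbd : ∀ i ω, |Z i ω| ≤ M)
    (α : ℝ) (hα : 0 < α) (hα1 : α < 1) (istar : I)
    (hopt : ∀ i, CVaR μ (Z i) α ≤ CVaR μ (Z istar) α) :
    (∀ i, ∫ ω, min (Z i ω) (VaR μ (Z istar) α) ∂μ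
        ≤ ∫ ω, min (Z istar ω) (VaR μ (Z istar) α) ∂μ)
    ∧ ∀ j, (∀ i, ∫ ω, min (Z i ω) (VaR μ (Z istar) α) ∂μ
        ≤ ∫ ω, min (Z j ω) (VaR μ (Z istar) α) ∂μ) →
      CVaR μ (Z j) α = CVaR μ (Z istar) α := by
  set C : ℝ := VaR μ (Z istar) α with hCdef
  have key : ∀ i, ∫ ω, min (Z i ω) C ∂μ ≤ α * CVaR μ (Z i) α + (1 - α) * C :=
    fun i => (capped μ (Z i) (hZ i) M (hbd i) α hα hα1 C).1
  have keyeq : ∫ ω, min (Z istar ω) C ∂μ = α * CVaR μ (Z istar) α + (1 - α) * C :=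
    (capped μ (Z istar) (hZ istar) M (hbd istar) α hα hα1 C).2 hCdef
  constructor
  · intro i
    calc ∫ ω, min (Z i ω) C ∂μ ≤ α * CVaR μ (Z i) α + (1 - α) * C := key i
      _ ≤ α * CVaR μ (Z istar) α + (1 - α) * C := by
          have := hopt i
          nlinarith
      _ = ∫ ω, min (Z istar ω) C ∂μ := keyeq.symm
  · intro j hj
    have h1 := hj istar
    rw [keyeq] at h1
    have h2 := le_trans h1 (key j)
    have h3 : CVaR μ (Z istar) α ≤ CVaR μ (Z j) α := by nlinarith
    exact le_antisymm (hopt j) h3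
end

section
/- Improving the capped objective improves CVaR: let Z and Z* be bounded real random variables, α ∈ (0,1), and C = VaR_α(Z*). If E[min(Z, C)] ≥ E[min(Z*, C)], then CVaR_α(Z) ≥ CVaR_α(Z*). -/
open MeasureTheory
open scoped ENNReal

open Set Filter Topology

section Aux

variable {Ω : Type*} [MeasurableSpace Ω] (μ : Measure Ω) [IsProbabilityMeasure μ]
  (W : Ω → ℝ)

/-- The cdf-like function. -/
noncomputable def Fcdf (z : ℝ) : ℝ := (μ {ω | W ω ≤ z}).toReal

lemma Fcdf_mono : Monotone (Fcdf μ W) := by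
  intro a b hab
  unfold Fcdf
  exact ENNReal.toReal_mono (measure_ne_top μ _)
    (measure_mono (fun ω hω => le_trans hω hab))

lemma Fcdf_nonneg (z : ℝ) : 0 ≤ Fcdf μ W z := ENNReal.toReal_nonneg

lemma Fcdf_le_one (z : ℝ) : Fcdf μ W z ≤ 1 := by
  unfold Fcdf
  have := prob_le_one (μ := μ) (s := {ω | W ω ≤ z})
  calc (μ {ω | W ω ≤ z}).toReal ≤ (1 : ENNReal).toReal :=
        ENNReal.toReal_mono (by simp) this
    _ = 1 := by simp

variable {M : ℝ} (hbd : ∀ ω, abs (W ω) ≤ M)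

include hbd in
lemma Fcdf_eq_one {z : ℝ} (hz : M ≤ z) : Fcdf μ W z = 1 := by
  have : {ω | W ω ≤ z} = univ := by
    ext ω; simp only [mem_setOf_eq, mem_univ, iff_true]
    exact le_trans (le_trans (le_abs_self _) (hbd ω)) hz
  unfold Fcdf
  rw [this, measure_univ]; simp

include hbd in
lemma Fcdf_eq_zero {z : ℝ} (hz : z < -M) : Fcdf μ W z = 0 := by
  have : {ω | W ω ≤ z} = (∅ : Set Ω) := by
    ext ω; simp only [mem_setOf_eq, mem_empty_iff_false, iff_false, not_le]
    exact lt_of_lt_of_le hz (neg_le_of_abs_le (hbd ω))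
  unfold Fcdf
  rw [this]; simp

include hbd in
/-- The set defining VaR. -/
lemma VaR_set_nonempty_s11 {x : ℝ} (hx1 : x ≤ 1) :
    {z : ℝ | x ≤ Fcdf μ W z}.Nonempty :=
  ⟨M, by simpa [Fcdf_eq_one μ W hbd le_rfl] using hx1⟩

include hbd in
lemma VaR_set_bddBelow_s11 {x : ℝ} (hx0 : 0 < x) :
    BddBelow {z : ℝ | x ≤ Fcdf μ W z} := by
  refine ⟨-M, fun z hz => ?_⟩
  by_contra hlt
  push_neg at hlt
  have h0 := Fcdf_eq_zero μ W hbd hlt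
  simp only [mem_setOf_eq, h0] at hz
  exact absurd hz (not_le.2 hx0)

lemma VaR_eq_sInf (x : ℝ) : VaR μ W x = sInf {z : ℝ | x ≤ Fcdf μ W z} := rfl

include hbd in
lemma Fcdf_sInf_mem (hW : Measurable W) {x : ℝ} (hx0 : 0 < x) (hx1 : x ≤ 1) :
    x ≤ Fcdf μ W (sInf {z : ℝ | x ≤ Fcdf μ W z}) := by
  set S := {z : ℝ | x ≤ Fcdf μ W z} with hS
  have hne := VaR_set_nonempty_s11 μ W hbd hx1
  have hbb := VaR_set_bddBelow_s11 μ W hbd hx0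
  set c := sInf S with hc
  -- x ≤ F (c + 1/(n+1)) for all n
  have hstep : ∀ n : ℕ, x ≤ Fcdf μ W (c + 1/(n+1)) := by
    intro n
    have hpos : (0:ℝ) < 1/(n+1) := by positivity
    have hlt : c < c + 1/(n+1) := by linarith
    obtain ⟨a, haS, halt⟩ := exists_lt_of_csInf_lt hne (by rw [← hc]; exact hlt)
    exact le_trans haS (Fcdf_mono μ W halt.le)
  -- sets
  have hseteq : {ω | W ω ≤ c} = ⋂ n : ℕ, {ω | W ω ≤ c + 1/(n+1)} := by
    ext ω
    simp only [mem_setOf_eq, mem_iInter]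
    constructor
    · intro h n
      have hp : (0:ℝ) < 1/(n+1) := by positivity
      linarith
    · intro h
      refine le_of_forall_pos_le_add fun ε hε => ?_
      obtain ⟨n, hn⟩ := exists_nat_one_div_lt hε
      exact le_trans (h n) (by linarith)
  have hanti : Antitone (fun n : ℕ => {ω | W ω ≤ c + 1/(n+1)}) := by
    intro m n hmn
    intro ω hω
    simp only [mem_setOf_eq] at hω ⊢
    have : (1:ℝ)/(n+1) ≤ 1/(m+1) := by
      apply one_div_le_one_div_of_le (by positivity)
      have : (m:ℝ) ≤ n := Nat.cast_le.2 hmn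
      linarith
    linarith
  have htend : Tendsto (fun n : ℕ => μ {ω | W ω ≤ c + 1/(n+1)}) atTop
      (𝓝 (μ {ω | W ω ≤ c})) := by
    rw [hseteq]
    exact tendsto_measure_iInter_atTop
      (fun n => (hW measurableSet_Iic).nullMeasurableSet)
      hanti ⟨0, measure_ne_top μ _⟩
  have htendR : Tendsto (fun n : ℕ => Fcdf μ W (c + 1/(n+1))) atTop
      (𝓝 (Fcdf μ W c)) := by
    unfold Fcdf
    exact (ENNReal.tendsto_toReal (measure_ne_top μ _)).comp htend
  exact ge_of_tendsto' htendR hstep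

include hbd in
/-- Key Galois property. -/
lemma VaR_le_iff (hW : Measurable W) {x : ℝ} (hx0 : 0 < x) (hx1 : x ≤ 1) (z : ℝ) :
    VaR μ W x ≤ z ↔ x ≤ Fcdf μ W z := by
  set S := {z : ℝ | x ≤ Fcdf μ W z} with hS
  have hne := VaR_set_nonempty_s11 μ W hbd hx1
  have hbb := VaR_set_bddBelow_s11 μ W hbd hx0
  constructor
  · intro hle
    have hmem := Fcdf_sInf_mem μ W hbd hW hx0 hx1
    exact le_trans hmem (Fcdf_mono μ W hle)
  · intro hmem
    exact csInf_le hbb hmem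

include hbd in
lemma VaR_le_M (hW : Measurable W) {x : ℝ} (hx0 : 0 < x) (hx1 : x ≤ 1) :
    VaR μ W x ≤ M :=
  (VaR_le_iff μ W hbd hW hx0 hx1 M).2 (by rw [Fcdf_eq_one μ W hbd le_rfl]; exact hx1)

include hbd in
include hbd in
lemma neg_M_le_VaR {x : ℝ} (hx0 : 0 < x) (hx1 : x ≤ 1) :
    -M ≤ VaR μ W x := by
  refine le_csInf (VaR_set_nonempty_s11 μ W hbd hx1) fun z hz => ?_
  by_contra hlt
  push_neg at hlt
  have h0 := Fcdf_eq_zero μ W hbd hlt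
  unfold Fcdf at h0
  simp only [mem_setOf_eq, h0] at hz
  exact absurd hz (not_le.2 hx0)

include hbd in
lemma VaR_mono_s11 {x y : ℝ} (hx0 : 0 < x) (hxy : x ≤ y) (hy1 : y ≤ 1) :
    VaR μ W x ≤ VaR μ W y := by
  apply csInf_le_csInf (VaR_set_bddBelow_s11 μ W hbd hx0)
    (VaR_set_nonempty_s11 μ W hbd hy1)
  intro z hz
  exact le_trans hxy hz

include hbd in
/-- VaR of min equals min of VaR. -/
lemma VaR_min (hW : Measurable W) (C : ℝ) {x : ℝ} (hx0 : 0 < x) (hx1 : x ≤ 1) :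
    VaR μ (fun ω => min (W ω) C) x = min (VaR μ W x) C := by
  have hbd' : ∀ ω, |min (W ω) C| ≤ max M |C| := by
    intro ω
    rw [abs_le]
    constructor
    · rcases le_total (W ω) C with h | h
      · rw [min_eq_left h]
        calc -(max M |C|) ≤ -M := by simp
          _ ≤ W ω := neg_le_of_abs_le (hbd ω)
      · rw [min_eq_right h]
        calc -(max M |C|) ≤ -|C| := by simp
          _ ≤ C := neg_abs_le C
    · rcases le_total (W ω) C with h | h
      · rw [min_eq_left h]
        exact le_trans (le_trans (le_abs_self _) (hbd ω)) (le_max_left _ _)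
      · rw [min_eq_right h]
        exact le_trans (le_abs_self _) (le_max_right _ _)
  have hWmin : Measurable (fun ω => min (W ω) C) := hW.min measurable_const
  have key : ∀ z : ℝ, (VaR μ (fun ω => min (W ω) C) x ≤ z ↔ min (VaR μ W x) C ≤ z) := by
    intro z
    rw [VaR_le_iff μ _ hbd' hWmin hx0 hx1 z, min_le_iff,
      VaR_le_iff μ W hbd hW hx0 hx1 z]
    rcases le_or_gt C z with hCz | hCz
    · simp only [hCz, or_true, iff_true]
      have : Fcdf μ (fun ω => min (W ω) C) z = 1 := by
        unfold Fcdf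
        have hset : {ω | min (W ω) C ≤ z} = univ := by
          ext ω
          simp only [mem_setOf_eq, mem_univ, iff_true]
          exact le_trans (min_le_right _ _) hCz
        rw [hset, measure_univ]; simp
      rw [this]; exact hx1
    · have : Fcdf μ (fun ω => min (W ω) C) z = Fcdf μ W z := by
        unfold Fcdf
        congr 1
        apply congrArg
        ext ω
        simp only [mem_setOf_eq, min_le_iff]
        constructor
        · rintro (h | h)
          · exact h
          · exact absurd h (not_le.2 hCz)
        · exact fun h => Or.inl h
      rw [this]
      simp only [iff_self_or]
      intro hCz'
      exact absurd hCz' (not_le.2 hCz)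
  exact le_antisymm ((key _).2 le_rfl) ((key _).1 le_rfl)

end Aux

section Main

variable {Ω : Type*} [MeasurableSpace Ω] (μ : Measure Ω) [IsProbabilityMeasure μ]
  (W : Ω → ℝ) {M : ℝ}

/-- monotone extension of `VaR` to all of `ℝ`. -/
noncomputable def gext (M : ℝ) : ℝ → ℝ :=
  fun x => if 0 < x then VaR μ W (min x 1) else -M - 1

lemma gext_eq {x : ℝ} (hx : x ∈ Ioc (0:ℝ) 1) : gext μ W M x = VaR μ W x := by
  simp [gext, hx.1, min_eq_left hx.2]

lemma gext_mono (hbd : ∀ ω, abs (W ω) ≤ M) : Monotone (gext μ W M) := by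
  intro x y hxy
  unfold gext
  by_cases hx : 0 < x
  · have hy : 0 < y := lt_of_lt_of_le hx hxy
    rw [if_pos hx, if_pos hy]
    exact VaR_mono_s11 μ W hbd (lt_min hx one_pos) (min_le_min hxy le_rfl) (min_le_right _ _)
  · rw [if_neg hx]
    by_cases hy : 0 < y
    · rw [if_pos hy]
      have := neg_M_le_VaR μ W hbd (lt_min hy one_pos) (min_le_right y 1)
      linarith
    · rw [if_neg hy]

lemma gext_measurable (hbd : ∀ ω, abs (W ω) ≤ M) : Measurable (gext μ W M) :=
  (gext_mono μ W hbd).measurable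

lemma VaR_integrableOn (hW : Measurable W) (hbd : ∀ ω, abs (W ω) ≤ M) :
    IntegrableOn (fun x => VaR μ W x) (Ioc (0:ℝ) 1) volume := by
  refine Integrable.mono' (integrable_const M) ?_ ?_
  · refine ((gext_measurable μ W hbd).aestronglyMeasurable).congr ?_
    rw [Filter.EventuallyEq, ae_restrict_iff' measurableSet_Ioc]
    exact Filter.Eventually.of_forall fun x hx => gext_eq μ W hx
  · rw [ae_restrict_iff' measurableSet_Ioc]
    refine Filter.Eventually.of_forall fun x hx => ?_
    rw [Real.norm_eq_abs, abs_le]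
    exact ⟨neg_M_le_VaR μ W hbd hx.1 hx.2, VaR_le_M μ W hbd hW hx.1 hx.2⟩

lemma map_gext_eq (hbd : ∀ ω, abs (W ω) ≤ M) (hW : Measurable W) :
    Measure.map (gext μ W M) (volume.restrict (Ioc (0:ℝ) 1)) = Measure.map W μ := by
  have hFin : IsFiniteMeasure (volume.restrict (Ioc (0:ℝ) 1)) := by
    constructor
    rw [Measure.restrict_apply_univ, Real.volume_Ioc]
    simp
  have hg := gext_measurable μ W hbd
  refine Measure.ext_of_Iic _ _ fun z => ?_
  rw [Measure.map_apply hg measurableSet_Iic, Measure.map_apply hW measurableSet_Iic,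
    Measure.restrict_apply (hg measurableSet_Iic)]
  have hset : gext μ W M ⁻¹' Iic z ∩ Ioc 0 1 = Ioc 0 (Fcdf μ W z) := by
    ext x
    simp only [mem_inter_iff, mem_preimage, mem_Iic, mem_Ioc]
    constructor
    · rintro ⟨hgz, hx0, hx1⟩
      rw [gext_eq μ W ⟨hx0, hx1⟩] at hgz
      exact ⟨hx0, (VaR_le_iff μ W hbd hW hx0 hx1 z).1 hgz⟩
    · rintro ⟨hx0, hxF⟩
      have hx1 : x ≤ 1 := le_trans hxF (Fcdf_le_one μ W z)
      refine ⟨?_, hx0, hx1⟩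
      rw [gext_eq μ W ⟨hx0, hx1⟩]
      exact (VaR_le_iff μ W hbd hW hx0 hx1 z).2 hxF
  rw [hset, Real.volume_Ioc]
  have : W ⁻¹' Iic z = {ω | W ω ≤ z} := rfl
  rw [this]
  rw [sub_zero]
  unfold Fcdf
  exact ENNReal.ofReal_toReal (measure_ne_top μ _)

lemma integral_eq_integral_VaR (hbd : ∀ ω, abs (W ω) ≤ M) (hW : Measurable W) :
    ∫ ω, W ω ∂μ = ∫ x in Ioc (0:ℝ) 1, VaR μ W x := by
  have hg := gext_measurable μ W hbd
  have h1 : ∫ x in Ioc (0:ℝ) 1, VaR μ W x = ∫ x in Ioc (0:ℝ) 1, gext μ W M x :=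
    setIntegral_congr_fun measurableSet_Ioc fun x hx => (gext_eq μ W hx).symm
  have h2 : ∫ x in Ioc (0:ℝ) 1, gext μ W M x
      = ∫ y, y ∂(Measure.map (gext μ W M) (volume.restrict (Ioc (0:ℝ) 1))) :=
    (integral_map hg.aemeasurable measurable_id.aestronglyMeasurable).symm
  have h3 : ∫ y, y ∂(Measure.map W μ) = ∫ ω, W ω ∂μ :=
    integral_map hW.aemeasurable measurable_id.aestronglyMeasurable
  rw [h1, h2, map_gext_eq μ W hbd hW, h3]

end Main

theorem capped_improvement_improves_cvar {Ω : Type*} [MeasurableSpace Ω] (μ : Measure Ω)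
    [IsProbabilityMeasure μ] (Z Zstar : Ω → ℝ) (hZ : Measurable Z) (hZstar : Measurable Zstar)
    (M : ℝ) (hbdZ : ∀ ω, |Z ω| ≤ M) (hbdZstar : ∀ ω, |Zstar ω| ≤ M)
    (α : ℝ) (hα : 0 < α) (hα1 : α < 1)
    (h : ∫ ω, min (Zstar ω) (VaR μ Zstar α) ∂μ ≤ ∫ ω, min (Z ω) (VaR μ Zstar α) ∂μ) :
    CVaR μ Zstar α ≤ CVaR μ Z α := by
  set C := VaR μ Zstar α with hC
  have hα1' : α ≤ 1 := hα1.le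
  have hCle : C ≤ M := VaR_le_M μ Zstar hbdZstar hZstar hα hα1'
  have hCge : -M ≤ C := neg_M_le_VaR μ Zstar hbdZstar hα hα1'
  -- bounds for capped variables
  have hbdmin : ∀ (W : Ω → ℝ), (∀ ω, |W ω| ≤ M) → ∀ ω, |min (W ω) C| ≤ M := by
    intro W hbd ω
    rw [abs_le]
    constructor
    · exact le_min (neg_le_of_abs_le (hbd ω)) hCge
    · exact le_trans (min_le_left _ _) (le_of_abs_le (hbd ω))
  -- integral representations
  have EZstar : ∫ ω, min (Zstar ω) C ∂μ
      = ∫ x in Ioc (0:ℝ) 1, min (VaR μ Zstar x) C := by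
    rw [integral_eq_integral_VaR μ (fun ω => min (Zstar ω) C) (hbdmin Zstar hbdZstar)
      (hZstar.min measurable_const)]
    exact setIntegral_congr_fun measurableSet_Ioc fun x hx =>
      VaR_min μ Zstar hbdZstar hZstar C hx.1 hx.2
  have EZ : ∫ ω, min (Z ω) C ∂μ
      = ∫ x in Ioc (0:ℝ) 1, min (VaR μ Z x) C := by
    rw [integral_eq_integral_VaR μ (fun ω => min (Z ω) C) (hbdmin Z hbdZ)
      (hZ.min measurable_const)]
    exact setIntegral_congr_fun measurableSet_Ioc fun x hx =>
      VaR_min μ Z hbdZ hZ C hx.1 hx.2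
  -- integrability
  have IZstar := VaR_integrableOn μ Zstar hZstar hbdZstar
  have IZ := VaR_integrableOn μ Z hZ hbdZ
  have IminZstar : IntegrableOn (fun x => min (VaR μ Zstar x) C) (Ioc (0:ℝ) 1) volume := by
    have := (VaR_integrableOn μ (fun ω => min (Zstar ω) C)
      (hZstar.min measurable_const) (hbdmin Zstar hbdZstar))
    refine this.congr_fun (fun x hx => VaR_min μ Zstar hbdZstar hZstar C hx.1 hx.2)
      measurableSet_Ioc
  have IminZ : IntegrableOn (fun x => min (VaR μ Z x) C) (Ioc (0:ℝ) 1) volume := by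
    have := (VaR_integrableOn μ (fun ω => min (Z ω) C)
      (hZ.min measurable_const) (hbdmin Z hbdZ))
    refine this.congr_fun (fun x hx => VaR_min μ Z hbdZ hZ C hx.1 hx.2)
      measurableSet_Ioc
  -- split domain
  have hsplit : Ioc (0:ℝ) 1 = Ioc 0 α ∪ Ioc α 1 := (Ioc_union_Ioc_eq_Ioc hα.le hα1').symm
  have hdisj : Disjoint (Ioc (0:ℝ) α) (Ioc α 1) := Ioc_disjoint_Ioc_of_le le_rfl
  have hsub1 : Ioc (0:ℝ) α ⊆ Ioc 0 1 := Ioc_subset_Ioc le_rfl hα1'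
  have hsub2 : Ioc α 1 ⊆ Ioc (0:ℝ) 1 := Ioc_subset_Ioc hα.le le_rfl
  have hvol : (volume (Ioc α 1)).toReal = 1 - α := by
    rw [Real.volume_Ioc, ENNReal.toReal_ofReal (by linarith)]
  -- (1): ∫ min(VaR Z*, C) = ∫_{(0,α]} VaR Z* + (1-α) C
  have eq1 : ∫ x in Ioc (0:ℝ) 1, min (VaR μ Zstar x) C
      = (∫ x in Ioc (0:ℝ) α, VaR μ Zstar x) + (1 - α) * C := by
    rw [hsplit, setIntegral_union hdisj measurableSet_Ioc (IminZstar.mono_set hsub1)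
      (IminZstar.mono_set hsub2)]
    have e1 : ∫ x in Ioc (0:ℝ) α, min (VaR μ Zstar x) C = ∫ x in Ioc (0:ℝ) α, VaR μ Zstar x := by
      refine setIntegral_congr_fun measurableSet_Ioc fun x hx => ?_
      exact min_eq_left (VaR_mono_s11 μ Zstar hbdZstar hx.1 hx.2 hα1')
    have e2 : ∫ x in Ioc α 1, min (VaR μ Zstar x) C = (1 - α) * C := by
      have : ∀ x ∈ Ioc α 1, min (VaR μ Zstar x) C = C := by
        intro x hx
        exact min_eq_right (VaR_mono_s11 μ Zstar hbdZstar hα hx.1.le hx.2)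
      rw [setIntegral_congr_fun measurableSet_Ioc this, setIntegral_const, measureReal_def, hvol, smul_eq_mul]
    rw [e1, e2]
  -- (2): ∫ min(VaR Z, C) ≤ ∫_{(0,α]} VaR Z + (1-α) C
  have le2 : ∫ x in Ioc (0:ℝ) 1, min (VaR μ Z x) C
      ≤ (∫ x in Ioc (0:ℝ) α, VaR μ Z x) + (1 - α) * C := by
    rw [hsplit, setIntegral_union hdisj measurableSet_Ioc (IminZ.mono_set hsub1)
      (IminZ.mono_set hsub2)]
    have l1 : ∫ x in Ioc (0:ℝ) α, min (VaR μ Z x) C ≤ ∫ x in Ioc (0:ℝ) α, VaR μ Z x := by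
      refine setIntegral_mono_on (IminZ.mono_set hsub1) (IZ.mono_set hsub1)
        measurableSet_Ioc fun x _ => min_le_left _ _
    have l2 : ∫ x in Ioc α 1, min (VaR μ Z x) C ≤ (1 - α) * C := by
      calc ∫ x in Ioc α 1, min (VaR μ Z x) C ≤ ∫ x in Ioc α 1, C :=
            setIntegral_mono_on (IminZ.mono_set hsub2)
              (integrableOn_const (by rw [Real.volume_Ioc]; exact ENNReal.ofReal_ne_top))
              measurableSet_Ioc fun x _ => min_le_right _ _
        _ = (1 - α) * C := by rw [setIntegral_const, measureReal_def, hvol, smul_eq_mul]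
    linarith
  -- conclude
  have key : ∫ x in Ioc (0:ℝ) α, VaR μ Zstar x ≤ ∫ x in Ioc (0:ℝ) α, VaR μ Z x := by
    have h1 : (∫ x in Ioc (0:ℝ) α, VaR μ Zstar x) + (1 - α) * C
        ≤ (∫ x in Ioc (0:ℝ) α, VaR μ Z x) + (1 - α) * C := by
      rw [← eq1]
      calc ∫ x in Ioc (0:ℝ) 1, min (VaR μ Zstar x) C = ∫ ω, min (Zstar ω) C ∂μ := EZstar.symm
        _ ≤ ∫ ω, min (Z ω) C ∂μ := h
        _ = ∫ x in Ioc (0:ℝ) 1, min (VaR μ Z x) C := EZ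
        _ ≤ _ := le2
    linarith
  unfold CVaR
  rw [intervalIntegral.integral_of_le hα.le, intervalIntegral.integral_of_le hα.le]
  exact mul_le_mul_of_nonneg_left key (by positivity)
end

section
/- The capped expectation is bounded below by α times CVaR plus the truncated remainder: for a bounded real random variable Z, α ∈ (0,1), and any C ≥ VaR_α(Z), one has E[min(Z, C)] ≥ α · CVaR_α(Z) + (1 − α) · VaR_α(Z). -/
open MeasureTheory Set Filter ENNReal

theorem capped_expectation_lower_bound {Ω : Type*} [MeasurableSpace Ω] (μ : Measure Ω) [IsProbabilityMeasure μ]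
    (Z : Ω → ℝ) (hZ : Measurable Z) (M : ℝ) (hbd : ∀ ω, |Z ω| ≤ M)
    (α : ℝ) (hα : 0 < α) (hα1 : α < 1) (C : ℝ) (hC : VaR μ Z α ≤ C) :
    α * CVaR μ Z α + (1 - α) * VaR μ Z α ≤ ∫ ω, min (Z ω) C ∂μ := by
  classical
  set F : ℝ → ℝ := fun z => (μ {ω | Z ω ≤ z}).toReal with hFdef
  set t : ℝ := VaR μ Z α with htdef
  -- Ω nonempty
  obtain ⟨ω₀⟩ : Nonempty Ω := by
    by_contra h
    rw [not_nonempty_iff] at h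
    have : μ Set.univ = 1 := measure_univ
    simp [Set.univ_eq_empty_iff.2 h] at this
  have hM0 : 0 ≤ M := le_trans (abs_nonneg _) (hbd ω₀)
  -- basic facts about F
  have hFmono : Monotone F := by
    intro a b hab
    exact ENNReal.toReal_mono (measure_ne_top μ _)
      (measure_mono fun ω h => le_trans h hab)
  have hmeasZle : ∀ c : ℝ, MeasurableSet {ω | Z ω ≤ c} := fun c => hZ measurableSet_Iic
  have hFM : F M = 1 := by
    have : {ω | Z ω ≤ M} = Set.univ := by
      ext ω; simp [(abs_le.mp (hbd ω)).2]
    simp [hFdef, this]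
  have hMmem : ∀ x : ℝ, x ≤ 1 → x ≤ F M := fun x hx => hFM ▸ hx
  have hbddS : ∀ {x : ℝ}, 0 < x → ∀ z ∈ {z : ℝ | x ≤ F z}, -M ≤ z := by
    intro x hx z hz
    have hne : μ {ω | Z ω ≤ z} ≠ 0 := by
      intro h0
      simp only [hFdef, Set.mem_setOf_eq, h0, ENNReal.toReal_zero] at hz
      linarith
    obtain ⟨ω, hω⟩ := nonempty_of_measure_ne_zero hne
    have hω2 : Z ω ≤ z := hω
    linarith [(abs_le.mp (hbd ω)).1]
  have hbddbelow : ∀ {x : ℝ}, 0 < x → BddBelow {z : ℝ | x ≤ F z} :=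
    fun {x} hx => ⟨-M, fun z hz => hbddS hx z hz⟩
  have hnonempty : ∀ {x : ℝ}, x ≤ 1 → ({z : ℝ | x ≤ F z}).Nonempty :=
    fun {x} hx => ⟨M, hMmem x hx⟩
  -- Lemma C : VaR is the generalized inverse of F
  have hCiff : ∀ x z : ℝ, 0 < x → x ≤ 1 → (VaR μ Z x ≤ z ↔ x ≤ F z) := by
    intro x z hx hx1
    constructor
    · intro h
      have key : ∀ n : ℕ, x ≤ F (z + 1 / (n + 1)) := by
        intro n
        have hpos : (0:ℝ) < 1 / ((n:ℝ) + 1) := by positivity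
        have hlt : sInf {z : ℝ | x ≤ F z} < z + 1 / (n + 1) :=
          lt_of_le_of_lt h (by linarith)
        obtain ⟨z', hz'S, hz'lt⟩ := exists_lt_of_csInf_lt (hnonempty hx1) hlt
        exact le_trans hz'S (hFmono hz'lt.le)
      have hiInt : ⋂ n : ℕ, {ω | Z ω ≤ z + 1 / ((n:ℝ) + 1)} = {ω | Z ω ≤ z} := by
        ext ω
        simp only [Set.mem_iInter, Set.mem_setOf_eq]
        constructor
        · intro h'
          by_contra hlt
          push_neg at hlt
          obtain ⟨n, hn⟩ := exists_nat_one_div_lt (show (0:ℝ) < Z ω - z from sub_pos.2 hlt)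
          have := h' n
          linarith
        · intro h' n
          have : (0:ℝ) < 1 / ((n:ℝ) + 1) := by positivity
          linarith
      have hT : Tendsto (fun n : ℕ => μ {ω | Z ω ≤ z + 1 / ((n:ℝ) + 1)}) atTop
          (nhds (μ {ω | Z ω ≤ z})) := by
        rw [← hiInt]
        refine tendsto_measure_iInter_atTop (fun n => (hmeasZle _).nullMeasurableSet) ?_
          ⟨0, measure_ne_top μ _⟩
        intro n m hnm ω hω
        simp only [Set.mem_setOf_eq] at hω ⊢
        have h1 : (1:ℝ) / ((m:ℝ) + 1) ≤ 1 / ((n:ℝ) + 1) := by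
          apply one_div_le_one_div_of_le (by positivity)
          exact_mod_cast Nat.succ_le_succ hnm
        linarith
      have hT2 : Tendsto (fun n : ℕ => F (z + 1 / ((n:ℝ) + 1))) atTop (nhds (F z)) :=
        (ENNReal.tendsto_toReal (measure_ne_top μ _)).comp hT
      exact ge_of_tendsto' hT2 key
    · intro h
      exact csInf_le (hbddbelow hx) h
  have hFt : α ≤ F t := (hCiff α t hα hα1.le).1 le_rfl
  have hDlt : ∀ z : ℝ, z < t → F z < α := by
    intro z hz
    by_contra h
    push_neg at h
    exact absurd (csInf_le (hbddbelow hα) h) (not_le.2 hz)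
  have ht_le_M : t ≤ M := csInf_le (hbddbelow hα) (hMmem α hα1.le)
  have hnegM_le_t : -M ≤ t := le_csInf (hnonempty hα1.le) (fun z hz => hbddS hα z hz)
  have hq_le_t : ∀ x ∈ Set.Ioc (0:ℝ) α, VaR μ Z x ≤ t := by
    intro x hx
    exact (hCiff x t hx.1 (le_trans hx.2 hα1.le)).2 (le_trans hx.2 hFt)
  have hq_ge : ∀ x ∈ Set.Ioc (0:ℝ) α, -M ≤ VaR μ Z x := by
    intro x hx
    exact le_csInf (hnonempty (le_trans hx.2 hα1.le)) (fun z hz => hbddS hx.1 z hz)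
  have hFmeas : Measurable F := hFmono.measurable
  -- the key quantity
  set A : ℝ≥0∞ := ∫⁻ z in Set.Ico (-M) t, μ {ω | Z ω ≤ z} with hAdef
  set ν : Measure ℝ := volume.restrict (Set.Ico (-M) t) with hνdef
  have hs₁ : MeasurableSet {p : Ω × ℝ | Z p.1 ≤ p.2} :=
    measurableSet_le (hZ.comp measurable_fst) measurable_snd
  have hs₂ : MeasurableSet {p : ℝ × ℝ | p.1 ≤ F p.2} :=
    measurableSet_le measurable_fst (hFmeas.comp measurable_snd)
  have hA1 : ∫⁻ ω, ENNReal.ofReal (t - Z ω) ∂μ = A := by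
    have h1 : ∀ ω, ENNReal.ofReal (t - Z ω) = ν {z | Z ω ≤ z} := by
      intro ω
      have hset : {z | Z ω ≤ z} = Set.Ici (Z ω) := rfl
      rw [hνdef, hset, Measure.restrict_apply measurableSet_Ici]
      rw [show Set.Ici (Z ω) = {z | Z ω ≤ z} from rfl]
      have : {z | Z ω ≤ z} ∩ Set.Ico (-M) t = Set.Ico (Z ω) t := by
        ext z
        simp only [Set.mem_inter_iff, Set.mem_setOf_eq, Set.mem_Ico]
        constructor
        · rintro ⟨h1, _, h3⟩; exact ⟨h1, h3⟩
        · rintro ⟨h1, h2⟩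
          exact ⟨h1, le_trans (abs_le.mp (hbd ω)).1 h1, h2⟩
      rw [this, Real.volume_Ico]
    simp_rw [h1]
    calc ∫⁻ ω, ν {z | Z ω ≤ z} ∂μ = μ.prod ν {p : Ω × ℝ | Z p.1 ≤ p.2} :=
          (Measure.prod_apply hs₁).symm
      _ = ∫⁻ z, μ {ω | Z ω ≤ z} ∂ν := Measure.prod_apply_symm hs₁
      _ = A := rfl
  have hB1 : ∫⁻ x in Set.Ioc (0:ℝ) α, ENNReal.ofReal (t - VaR μ Z x) = A := by
    have h1 : ∀ x ∈ Set.Ioc (0:ℝ) α, ENNReal.ofReal (t - VaR μ Z x) = ν {z | x ≤ F z} := by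
      intro x hx
      rw [hνdef, Measure.restrict_apply (measurableSet_le measurable_const hFmeas)]
      have : {z | x ≤ F z} ∩ Set.Ico (-M) t = Set.Ico (VaR μ Z x) t := by
        ext z
        simp only [Set.mem_inter_iff, Set.mem_setOf_eq, Set.mem_Ico]
        constructor
        · rintro ⟨h1, _, h3⟩
          exact ⟨(hCiff x z hx.1 (le_trans hx.2 hα1.le)).2 h1, h3⟩
        · rintro ⟨h1, h2⟩
          exact ⟨(hCiff x z hx.1 (le_trans hx.2 hα1.le)).1 h1,
            le_trans (hq_ge x hx) h1, h2⟩
      rw [this, Real.volume_Ico]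
    calc ∫⁻ x in Set.Ioc (0:ℝ) α, ENNReal.ofReal (t - VaR μ Z x)
        = ∫⁻ x in Set.Ioc (0:ℝ) α, ν {z | x ≤ F z} :=
          setLIntegral_congr_fun measurableSet_Ioc (fun x hx => h1 x hx)
      _ = (volume.restrict (Set.Ioc (0:ℝ) α)).prod ν {p : ℝ × ℝ | p.1 ≤ F p.2} :=
          (Measure.prod_apply hs₂).symm
      _ = ∫⁻ z, volume.restrict (Set.Ioc (0:ℝ) α) {x | x ≤ F z} ∂ν :=
          Measure.prod_apply_symm hs₂
      _ = A := by
        refine setLIntegral_congr_fun measurableSet_Ico ?_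
        intro z hz
        beta_reduce
        have hIic : {x : ℝ | x ≤ F z} = Set.Iic (F z) := rfl
        rw [hIic, Measure.restrict_apply measurableSet_Iic]
        rw [show Set.Iic (F z) = {x : ℝ | x ≤ F z} from rfl]
        have hFz0 : 0 ≤ F z := ENNReal.toReal_nonneg
        have hFzα : F z ≤ α := (hDlt z hz.2).le
        have : {x | x ≤ F z} ∩ Set.Ioc (0:ℝ) α = Set.Ioc 0 (F z) := by
          ext x
          simp only [Set.mem_inter_iff, Set.mem_setOf_eq, Set.mem_Ioc]
          constructor
          · rintro ⟨h1, h2, _⟩; exact ⟨h2, h1⟩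
          · rintro ⟨h1, h2⟩; exact ⟨h2, h1, le_trans h2 hFzα⟩
        rw [this, Real.volume_Ioc, sub_zero, hFdef]
        exact ENNReal.ofReal_toReal (measure_ne_top μ _)
  -- integrability and real integrals
  have hMaxMeas : Measurable (fun ω => max (t - Z ω) 0) :=
    (measurable_const.sub hZ).max measurable_const
  have hMaxInt : Integrable (fun ω => max (t - Z ω) 0) μ := by
    refine (integrable_const (t + M)).mono' hMaxMeas.aestronglyMeasurable (ae_of_all _ ?_)
    intro ω
    rw [Real.norm_eq_abs, abs_of_nonneg (le_max_right _ _)]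
    have := (abs_le.mp (hbd ω)).1
    exact max_le (by linarith) (by linarith)
  have hInt1 : ∫ ω, max (t - Z ω) 0 ∂μ = A.toReal := by
    rw [integral_eq_lintegral_of_nonneg_ae (f := fun ω => max (t - Z ω) 0)
      (ae_of_all _ fun ω => le_max_right (t - Z ω) 0) hMaxMeas.aestronglyMeasurable]
    congr 1
    rw [← hA1]
    refine lintegral_congr fun ω => ?_
    rcases le_total (t - Z ω) 0 with h | h
    · rw [max_eq_right h, ENNReal.ofReal_zero, eq_comm, ENNReal.ofReal_eq_zero]
      exact h
    · rw [max_eq_left h]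
  have hqmonoOn : MonotoneOn (VaR μ Z) (Set.Ioc (0:ℝ) α) := by
    intro x hx y hy hxy
    refine csInf_le_csInf (hbddbelow hx.1) (hnonempty (le_trans hy.2 hα1.le)) ?_
    intro z hz
    exact le_trans hxy hz
  have hq_aemeas : AEMeasurable (VaR μ Z) (volume.restrict (Set.Ioc (0:ℝ) α)) :=
    aemeasurable_restrict_of_monotoneOn measurableSet_Ioc hqmonoOn
  have hqInt : Integrable (VaR μ Z) (volume.restrict (Set.Ioc (0:ℝ) α)) := by
    refine (integrable_const M).mono' hq_aemeas.aestronglyMeasurable ?_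
    refine (ae_restrict_iff' measurableSet_Ioc).2 (ae_of_all _ ?_)
    intro x hx
    rw [Real.norm_eq_abs, abs_le]
    exact ⟨hq_ge x hx, le_trans (hq_le_t x hx) ht_le_M⟩
  have hInt2 : ∫ x in Set.Ioc (0:ℝ) α, (t - VaR μ Z x) = A.toReal := by
    rw [integral_eq_lintegral_of_nonneg_ae (f := fun x => t - VaR μ Z x)
      ((ae_restrict_iff' measurableSet_Ioc).2 (ae_of_all _ fun x hx =>
        sub_nonneg.2 (hq_le_t x hx)))
      (aemeasurable_const.sub hq_aemeas).aestronglyMeasurable]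
    rw [hB1]
  have hconst : ∫ _x in Set.Ioc (0:ℝ) α, (t:ℝ) = α * t := by
    rw [setIntegral_const, measureReal_def, Real.volume_Ioc, smul_eq_mul]
    rw [ENNReal.toReal_ofReal (by linarith)]
    ring
  have hCVaRval : ∫ x in (0:ℝ)..α, VaR μ Z x = α * t - A.toReal := by
    rw [intervalIntegral.integral_of_le hα.le]
    have hsub := integral_sub (integrable_const t) hqInt
    rw [hInt2, integral_const] at hsub
    have : ∫ x in Set.Ioc (0:ℝ) α, VaR μ Z x
        = (volume.restrict (Set.Ioc (0:ℝ) α) Set.univ).toReal • t - A.toReal := by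
      simp only [measureReal_def] at hsub
      linarith [hsub]
    rw [this, Measure.restrict_apply_univ, Real.volume_Ioc, smul_eq_mul,
      ENNReal.toReal_ofReal (by linarith)]
    ring
  have hαCVaR : α * CVaR μ Z α = α * t - A.toReal := by
    rw [CVaR, hCVaRval]
    field_simp
  -- min Z C integrable
  have hminInt : Integrable (fun ω => min (Z ω) C) μ := by
    refine (integrable_const (M + |C|)).mono'
      ((hZ.min measurable_const).aestronglyMeasurable) (ae_of_all _ ?_)
    intro ω
    rw [Real.norm_eq_abs]
    rcases le_total (Z ω) C with h | h
    · rw [min_eq_left h]; have := hbd ω; have := abs_nonneg C; linarith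
    · rw [min_eq_right h]; linarith [abs_nonneg C, le_abs_self C, neg_abs_le C, hM0]
  have hpt : ∀ ω, t - max (t - Z ω) 0 ≤ min (Z ω) C := by
    intro ω
    rcases le_total (Z ω) t with h | h
    · rw [max_eq_left (sub_nonneg.2 h)]
      have : t - (t - Z ω) = Z ω := by ring
      rw [this]
      exact le_min le_rfl (le_trans h hC)
    · rw [max_eq_right (sub_nonpos.2 h)]
      rw [sub_zero]
      exact le_min h hC
  have hineq : t - A.toReal ≤ ∫ ω, min (Z ω) C ∂μ := by
    have h1 : ∫ ω, (t - max (t - Z ω) 0) ∂μ = t - A.toReal := by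
      rw [integral_sub (integrable_const t) hMaxInt, hInt1, integral_const]
      simp
    rw [← h1]
    exact integral_mono ((integrable_const t).sub hMaxInt) hminInt hpt
  rw [hαCVaR]
  linarith
end
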